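/- arXiv:1812.06566 — 6 statements merged into one kernel-verified Lean document; each statement's English description precedes it below -/
import Mathlib

section
/- If K is a primary pseudoperfect number divisible by 6, then K ≡ 6 (mod 36). -/
def IsPPN (K : ℕ) : Prop :=
  1 < K ∧ (1 : ℚ) / K + ∑ p ∈ K.primeFactors, (1 : ℚ) / p = 1

theorem ppn_mod_36 (K : ℕ) (hK : IsPPN K) (h6 : 6 ∣ K) : K % 36 = 6 := by
  obtain ⟨h1, h2⟩ := hK
  have hK0 : (0:ℕ) < K := by omega
  have hKQ : (K:ℚ) ≠ 0 := by positivity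
  have hcast : ∀ p ∈ K.primeFactors, ((K / p : ℕ) : ℚ) = (K:ℚ) / p := by
    intro p hp
    exact Nat.cast_div (Nat.dvd_of_mem_primeFactors hp)
      (by exact_mod_cast (Nat.prime_of_mem_primeFactors hp).ne_zero)
  have hQ : (1:ℚ) + ∑ p ∈ K.primeFactors, (K:ℚ)/p = K := by
    have hs : ∑ p ∈ K.primeFactors, (K:ℚ)/p = (K:ℚ) * ∑ p ∈ K.primeFactors, (1:ℚ)/p := by
      rw [Finset.mul_sum]
      exact Finset.sum_congr rfl fun p _ => by ring
    have hsum : ∑ p ∈ K.primeFactors, (1:ℚ)/(p:ℚ) = 1 - 1/K := by linarith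
    rw [hs, hsum]
    field_simp
    ring
  have key : 1 + ∑ p ∈ K.primeFactors, K / p = K := by
    have : ((1 + ∑ p ∈ K.primeFactors, K / p : ℕ) : ℚ) = (K:ℚ) := by
      push_cast
      rw [Finset.sum_congr rfl hcast]
      exact hQ
    exact_mod_cast this
  -- no prime square divides K
  have hsq : ∀ q : ℕ, q.Prime → ¬ (q * q ∣ K) := by
    intro q hq hdvd
    have hqK : q ∣ K := dvd_trans (dvd_mul_left q q) hdvd
    have hqS : q ∣ ∑ p ∈ K.primeFactors, K / p := by
      refine Finset.dvd_sum fun p hp => ?_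
      have hpK := Nat.dvd_of_mem_primeFactors hp
      have hpP := Nat.prime_of_mem_primeFactors hp
      rw [Nat.dvd_div_iff_mul_dvd hpK]
      by_cases h : p = q
      · subst h; exact hdvd
      · exact Nat.Coprime.mul_dvd_of_dvd_of_dvd
          ((Nat.coprime_primes hpP hq).mpr h) hpK hqK
    have hd1 : q ∣ 1 := by
      have hd := Nat.dvd_sub hqK hqS
      have h1 : K - ∑ p ∈ K.primeFactors, K / p = 1 := by omega
      rwa [h1] at hd
    have := Nat.le_of_dvd one_pos hd1
    have := hq.two_le
    omega
  have h4 : ¬ (4 ∣ K) := by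
    intro h
    obtain ⟨c, rfl⟩ := h
    exact hsq 2 Nat.prime_two ⟨c, by ring⟩
  have h3mem : 3 ∈ K.primeFactors :=
    Nat.mem_primeFactors.mpr ⟨Nat.prime_three, dvd_trans ⟨2, rfl⟩ h6, hK0.ne'⟩
  have hsplit : ∑ p ∈ K.primeFactors, K / p
      = K / 3 + ∑ p ∈ K.primeFactors.erase 3, K / p :=
    (Finset.add_sum_erase _ _ h3mem).symm
  have h3K : 3 ∣ K := dvd_trans ⟨2, rfl⟩ h6
  have hdvd3 : 3 ∣ ∑ p ∈ K.primeFactors.erase 3, K / p := by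
    refine Finset.dvd_sum fun p hp => ?_
    have hpne : p ≠ 3 := Finset.ne_of_mem_erase hp
    have hpmem := Finset.mem_of_mem_erase hp
    have hpK := Nat.dvd_of_mem_primeFactors hpmem
    have hpP := Nat.prime_of_mem_primeFactors hpmem
    rw [Nat.dvd_div_iff_mul_dvd hpK]
    exact Nat.Coprime.mul_dvd_of_dvd_of_dvd
      ((Nat.coprime_primes hpP Nat.prime_three).mpr hpne) hpK h3K
    
  obtain ⟨s, hs⟩ := hdvd3
  have h2K : 2 ∣ K := dvd_trans ⟨3, rfl⟩ h6
  rw [hsplit, hs] at key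
  omega
end

section
/- If K is a primary pseudoperfect number divisible by 6, then the number of prime factors of K that are congruent to −1 modulo 6 is even. -/
theorem ppn_even_mu (K : ℕ) (hK : IsPPN K) (h6 : 6 ∣ K) :
    Even ((K.primeFactors.filter (fun p => p % 6 = 5)).card) := by
  obtain ⟨hK1, heq⟩ := hK
  have hK0 : K ≠ 0 := by omega
  have hKQ : (K : ℚ) ≠ 0 := by exact_mod_cast hK0
  -- integer version of the defining equation
  have hsumQ : (1 : ℚ) + ∑ p ∈ K.primeFactors, ((K / p : ℕ) : ℚ) = K := by
    have h := congrArg (fun x => (K : ℚ) * x) heq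
    simp only [mul_add, mul_one, Finset.mul_sum] at h
    rw [mul_one_div, div_self hKQ] at h
    rw [← h]
    congr 1
    refine Finset.sum_congr rfl fun p hp => ?_
    have hpd : p ∣ K := Nat.dvd_of_mem_primeFactors hp
    have hp0 : (p : ℚ) ≠ 0 := by
      exact_mod_cast (Nat.prime_of_mem_primeFactors hp).ne_zero
    rw [Nat.cast_div hpd hp0, mul_one_div]
  have hEQ : 1 + ∑ p ∈ K.primeFactors, K / p = K := by exact_mod_cast hsumQ
  -- K is squarefree
  have hsf : Squarefree K := by
    rw [Nat.squarefree_iff_prime_squarefree]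
    intro q hq hqq
    have hqK : q ∣ K := dvd_trans (dvd_mul_left q q) hqq
    have hqS : q ∣ ∑ p ∈ K.primeFactors, K / p := by
      refine Finset.dvd_sum fun p hp => ?_
      have hpP := Nat.prime_of_mem_primeFactors hp
      have hpd : p ∣ K := Nat.dvd_of_mem_primeFactors hp
      by_cases hpq : p = q
      · subst hpq
        obtain ⟨t, ht⟩ := hqq
        rw [ht, Nat.mul_assoc, Nat.mul_div_cancel_left _ hq.pos]
        exact Dvd.intro t rfl
      · have hmul : p * (K / p) = K := Nat.mul_div_cancel' hpd
        have : q ∣ p * (K / p) := by rw [hmul]; exact hqK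
        rcases (Nat.Prime.dvd_mul hq).mp this with h | h
        · exact absurd ((Nat.prime_dvd_prime_iff_eq hq hpP).mp h).symm hpq
        · exact h
    have : q ∣ 1 := by
      have h1 : 1 = K - ∑ p ∈ K.primeFactors, K / p := by omega
      rw [h1]; exact Nat.dvd_sub hqK hqS
    have hle := Nat.le_of_dvd one_pos this
    have := hq.two_le
    omega
  have h3K : (3 : ℕ) ∣ K := dvd_trans ⟨2, rfl⟩ h6
  have h2K : (2 : ℕ) ∣ K := dvd_trans ⟨3, rfl⟩ h6
  have h3 : 3 ∈ K.primeFactors := Nat.mem_primeFactors.mpr ⟨Nat.prime_three, h3K, hK0⟩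
  have h2 : 2 ∈ K.primeFactors := Nat.mem_primeFactors.mpr ⟨Nat.prime_two, h2K, hK0⟩
  set M := ∏ p ∈ K.primeFactors.erase 3, p with hM
  have hKM : K = 3 * M := by
    have h := Finset.mul_prod_erase K.primeFactors (fun p => p) h3
    rw [Nat.prod_primeFactors_of_squarefree hsf] at h
    exact h.symm
  -- reduce the equation mod 3
  have hsplit : ∑ p ∈ K.primeFactors, K / p = K / 3 + ∑ p ∈ K.primeFactors.erase 3, K / p :=
    (Finset.add_sum_erase _ _ h3).symm
  have hK3 : K / 3 = M := by rw [hKM]; exact Nat.mul_div_cancel_left _ (by norm_num)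
  have hmod : (M : ZMod 3) = -1 := by
    have h := congrArg (Nat.cast : ℕ → ZMod 3) hEQ
    rw [hsplit, hK3] at h
    push_cast at h
    have hz : ∑ p ∈ K.primeFactors.erase 3, ((K / p : ℕ) : ZMod 3) = 0 := by
      refine Finset.sum_eq_zero fun p hp => ?_
      obtain ⟨hp3, hpm⟩ := Finset.mem_erase.mp hp
      have hpP := Nat.prime_of_mem_primeFactors hpm
      have hpd : p ∣ K := Nat.dvd_of_mem_primeFactors hpm
      have hmul : p * (K / p) = K := Nat.mul_div_cancel' hpd
      have h3d : (3 : ℕ) ∣ K / p := by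
        have : (3 : ℕ) ∣ p * (K / p) := by rw [hmul]; exact h3K
        rcases (Nat.Prime.dvd_mul Nat.prime_three).mp this with h | h
        · exact absurd ((Nat.prime_dvd_prime_iff_eq Nat.prime_three hpP).mp h).symm hp3
        · exact h
      exact (ZMod.natCast_eq_zero_iff _ _).mpr h3d
    have hKz : ((K : ℕ) : ZMod 3) = 0 := (ZMod.natCast_eq_zero_iff _ _).mpr h3K
    rw [hz, hKz, add_zero] at h
    linear_combination h
  -- turn the product into a power of -1
  have hc : Odd (((K.primeFactors.erase 3).filter (fun p => p % 3 = 2)).card) := by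
    have hcast : (M : ZMod 3) = ∏ p ∈ K.primeFactors.erase 3, ((p : ℕ) : ZMod 3) := by
      rw [hM]; push_cast; rfl
    rw [← Finset.prod_filter_mul_prod_filter_not _ (fun p => p % 3 = 2)] at hcast
    have hA : ∏ p ∈ (K.primeFactors.erase 3).filter (fun p => p % 3 = 2),
        ((p : ℕ) : ZMod 3) = (-1) ^ ((K.primeFactors.erase 3).filter (fun p => p % 3 = 2)).card := by
      rw [← Finset.prod_const]
      refine Finset.prod_congr rfl fun p hp => ?_
      have hp2 : p % 3 = 2 := (Finset.mem_filter.mp hp).2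
      rw [← ZMod.natCast_mod, hp2]; decide
    have hB : ∏ p ∈ (K.primeFactors.erase 3).filter (fun p => ¬ p % 3 = 2),
        ((p : ℕ) : ZMod 3) = 1 := by
      refine Finset.prod_eq_one fun p hp => ?_
      obtain ⟨hpe, hpn2⟩ := Finset.mem_filter.mp hp
      obtain ⟨hp3, hpm⟩ := Finset.mem_erase.mp hpe
      have hpP := Nat.prime_of_mem_primeFactors hpm
      have hp1 : p % 3 = 1 := by
        have h0 : p % 3 ≠ 0 := by
          intro h0
          exact hp3 ((Nat.prime_dvd_prime_iff_eq Nat.prime_three hpP).mp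
            (Nat.dvd_of_mod_eq_zero h0)).symm
        omega
      rw [← ZMod.natCast_mod, hp1]; decide
    rw [hA, hB, mul_one, hmod] at hcast
    rcases Nat.even_or_odd (((K.primeFactors.erase 3).filter (fun p => p % 3 = 2)).card) with he | ho
    · exfalso
      rw [Even.neg_one_pow he] at hcast
      exact absurd hcast (by decide)
    · exact ho
  -- relate the two filters
  have hsets : (K.primeFactors.erase 3).filter (fun p => p % 3 = 2) =
      insert 2 (K.primeFactors.filter (fun p => p % 6 = 5)) := by
    ext p
    simp only [Finset.mem_insert, Finset.mem_filter, Finset.mem_erase]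
    constructor
    · rintro ⟨⟨hp3, hpm⟩, hp2⟩
      by_cases hp : p = 2
      · exact Or.inl hp
      · right
        refine ⟨hpm, ?_⟩
        have hpP := Nat.prime_of_mem_primeFactors hpm
        have hodd : p % 2 = 1 := Nat.odd_iff.mp (hpP.odd_of_ne_two hp)
        omega
    · rintro (rfl | ⟨hpm, hp5⟩)
      · exact ⟨⟨by norm_num, h2⟩, by norm_num⟩
      · exact ⟨⟨by omega, hpm⟩, by omega⟩
  have h2nm : 2 ∉ K.primeFactors.filter (fun p => p % 6 = 5) := by
    simp only [Finset.mem_filter]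
    rintro ⟨-, h⟩
    norm_num at h
  rw [hsets, Finset.card_insert_of_notMem h2nm] at hc
  rcases hc with ⟨k, hk⟩
  exact ⟨k, by omega⟩
end

section
/- Let K be a primary pseudoperfect number with K + 1 and K² + K + 1 both prime. Then K' := K(K+1) and K'' := K'(K'+1) are also primary pseudoperfect numbers. -/
lemma ppn_step (K : ℕ) (hK : IsPPN K) (hp : Nat.Prime (K + 1)) :
    IsPPN (K * (K + 1)) := by
  obtain ⟨hK1, hsum⟩ := hK
  have hK0 : K ≠ 0 := by omega
  constructor
  · nlinarith
  have hfac : (K * (K + 1)).primeFactors = K.primeFactors ∪ {K + 1} := by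
    rw [Nat.primeFactors_mul hK0 (by omega), hp.primeFactors]
  have hdisj : Disjoint K.primeFactors ({K + 1} : Finset ℕ) := by
    simp only [Finset.disjoint_singleton_right, Nat.mem_primeFactors]
    rintro ⟨-, hdvd, -⟩
    exact absurd (Nat.le_of_dvd (by omega) hdvd) (by omega)
  rw [hfac, Finset.sum_union hdisj, Finset.sum_singleton]
  have hsum' : ∑ p ∈ K.primeFactors, (1 : ℚ) / p = 1 - 1 / K := by
    linarith
  rw [hsum']
  have hKQ : (K : ℚ) ≠ 0 := Nat.cast_ne_zero.mpr hK0
  have hKQ1 : (K : ℚ) + 1 ≠ 0 := by positivity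
  push_cast
  field_simp
  ring

theorem ppn_triple (K : ℕ) (hK : IsPPN K) (hp : Nat.Prime (K + 1))
    (hq : Nat.Prime (K ^ 2 + K + 1)) :
    IsPPN (K * (K + 1)) ∧ IsPPN (K * (K + 1) * (K * (K + 1) + 1)) := by
  have h1 := ppn_step K hK hp
  refine ⟨h1, ppn_step _ h1 ?_⟩
  have : K * (K + 1) + 1 = K ^ 2 + K + 1 := by ring
  rw [this]; exact hq
end

section
/- Every primary pseudoperfect number K gives a solution to the Erdős–Moser congruence 1ⁿ + 2ⁿ + ⋯ + Kⁿ ≡ (K+1)ⁿ (mod K), where n := lcm{p − 1 : p prime, p ∣ K}. -/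
/-- The natural-number form of the PPN identity: `1 + ∑ K/p = K`. -/
lemma ppn_nat_identity (K : ℕ) (hK : IsPPN K) :
    1 + ∑ p ∈ K.primeFactors, K / p = K := by
  have hK0 : (K : ℚ) ≠ 0 := by
    have := hK.1; exact_mod_cast (by omega : K ≠ 0)
  have h := hK.2
  have hmul : (K : ℚ) * ((1 : ℚ) / K + ∑ p ∈ K.primeFactors, (1 : ℚ) / p) = K := by
    rw [h, mul_one]
  rw [mul_add, mul_one_div, div_self hK0, Finset.mul_sum] at hmul
  have hterm : ∀ p ∈ K.primeFactors, (K : ℚ) * ((1 : ℚ) / p) = ((K / p : ℕ) : ℚ) := by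
    intro p hp
    have hpd : p ∣ K := Nat.dvd_of_mem_primeFactors hp
    have hp0 : (p : ℚ) ≠ 0 := by
      exact_mod_cast (Nat.prime_of_mem_primeFactors hp).pos.ne'
    rw [Nat.cast_div hpd hp0, mul_one_div]
  rw [Finset.sum_congr rfl hterm] at hmul
  exact_mod_cast hmul

lemma ppn_squarefree (K : ℕ) (hK : IsPPN K) : Squarefree K := by
  have hid := ppn_nat_identity K hK
  rw [Nat.squarefree_iff_prime_squarefree]
  intro p hp hdvd
  have hpK : p ∣ K := (dvd_mul_right p p).trans hdvd
  have hmem : p ∈ K.primeFactors :=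
    Nat.mem_primeFactors.mpr ⟨hp, hpK, (lt_trans one_pos hK.1).ne'⟩
  have hsum : p ∣ ∑ q ∈ K.primeFactors, K / q := by
    apply Finset.dvd_sum
    intro q hq
    by_cases hqp : q = p
    · subst hqp
      obtain ⟨c, hc⟩ := hdvd
      refine ⟨c, ?_⟩
      rw [hc, mul_assoc, Nat.mul_div_cancel_left _ hp.pos]
    · have hqd : q ∣ K := Nat.dvd_of_mem_primeFactors hq
      have hcop : Nat.Coprime p q :=
        (Nat.coprime_primes hp (Nat.prime_of_mem_primeFactors hq)).mpr (Ne.symm hqp)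
      have : p ∣ (K / q) * q := by
        rw [Nat.div_mul_cancel hqd]; exact hpK
      exact (Nat.Coprime.dvd_of_dvd_mul_right hcop) this
  have h1 : p ∣ 1 := by
    have h : p ∣ 1 + ∑ q ∈ K.primeFactors, K / q := by rw [hid]; exact hpK
    rw [add_comm] at h
    exact (Nat.dvd_add_right hsum).mp h
  exact absurd (Nat.le_of_dvd one_pos h1) (by have := hp.two_le; omega)

/-- In `ZMod p`, `K/p ≡ -1` for every prime factor `p` of a PPN `K`. -/
lemma ppn_div_cast (K : ℕ) (hK : IsPPN K) (p : ℕ) (hp : p ∈ K.primeFactors) :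
    ((K / p : ℕ) : ZMod p) = -1 := by
  have hpp := Nat.prime_of_mem_primeFactors hp
  have hid := ppn_nat_identity K hK
  have hcast : ((1 + ∑ q ∈ K.primeFactors, K / q : ℕ) : ZMod p) = ((K : ℕ) : ZMod p) := by
    rw [hid]
  have hpK : p ∣ K := Nat.dvd_of_mem_primeFactors hp
  have hK0 : ((K : ℕ) : ZMod p) = 0 := (ZMod.natCast_eq_zero_iff K p).mpr hpK
  push_cast at hcast
  rw [hK0] at hcast
  have hsum : ∑ q ∈ K.primeFactors, ((K / q : ℕ) : ZMod p) = ((K / p : ℕ) : ZMod p) := by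
    apply Finset.sum_eq_single_of_mem p hp
    intro q hq hqp
    apply (ZMod.natCast_eq_zero_iff _ p).mpr
    have hqd : q ∣ K := Nat.dvd_of_mem_primeFactors hq
    have hcop : Nat.Coprime p q :=
      (Nat.coprime_primes hpp (Nat.prime_of_mem_primeFactors hq)).mpr (Ne.symm hqp)
    have : p ∣ (K / q) * q := by
      rw [Nat.div_mul_cancel hqd]; exact hpK
    exact hcop.dvd_of_dvd_mul_right this
  rw [hsum] at hcast
  linear_combination hcast

/-- Sum of `x^n` over `ZMod p` is `-1` when `(p-1) ∣ n` and `n ≠ 0`. -/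
lemma sum_pow_zmod (p n : ℕ) [Fact p.Prime] (hn : n ≠ 0) (hd : (p - 1) ∣ n) :
    ∑ x : ZMod p, x ^ n = -1 := by
  classical
  have hunits : (∑ x : (ZMod p)ˣ, ((x : ZMod p)) ^ n) = -1 := by
    have := FiniteField.sum_pow_units (ZMod p) n
    rw [ZMod.card] at this
    rw [if_pos hd] at this
    exact this
  have hsplit : ∑ x : ZMod p, x ^ n = ∑ x : (ZMod p)ˣ, ((x : ZMod p)) ^ n := by
    rw [← Finset.sum_subset (Finset.subset_univ ((Finset.univ : Finset (ZMod p)ˣ).map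
      ⟨Units.val, Units.val_injective⟩))]
    · rw [Finset.sum_map]; rfl
    · intro x _ hx
      have hx0 : x = 0 := by
        by_contra h0
        apply hx
        exact Finset.mem_map.mpr ⟨Units.mk0 x h0, Finset.mem_univ _, rfl⟩
      rw [hx0, zero_pow hn]
  rw [hsplit, hunits]

/-- Sum of `(i : ZMod p)^n` over `range p` equals the full sum over `ZMod p`. -/
lemma sum_range_pow_zmod (p n : ℕ) [NeZero p] :
    ∑ i ∈ Finset.range p, ((i : ZMod p)) ^ n = ∑ x : ZMod p, x ^ n := by
  exact Finset.sum_nbij' (fun i => ((i : ZMod p))) (fun x => x.val)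
    (fun i _ => Finset.mem_univ _) (fun x _ => Finset.mem_range.mpr (ZMod.val_lt x))
    (fun i hi => ZMod.val_cast_of_lt (Finset.mem_range.mp hi))
    (fun x _ => ZMod.natCast_zmod_val x) (fun i _ => rfl)

/-- Periodic sum over `range (m*p)`. -/
lemma sum_range_mul_pow (p n m : ℕ) :
    ∑ i ∈ Finset.range (m * p), ((i : ZMod p)) ^ n =
      (m : ZMod p) * ∑ i ∈ Finset.range p, ((i : ZMod p)) ^ n := by
  induction m with
  | zero => simp
  | succ m ih =>
      rw [Nat.succ_mul, Finset.sum_range_add, ih]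
      have : ∀ x ∈ Finset.range p, (((m * p + x : ℕ) : ZMod p)) ^ n = ((x : ZMod p)) ^ n := by
        intro x _
        push_cast
        rw [ZMod.natCast_self, mul_zero, zero_add]
      rw [Finset.sum_congr rfl this]
      push_cast
      ring

theorem ppn_erdos_moser_congruence (K : ℕ) (hK : IsPPN K) :
    (∑ i ∈ Finset.Icc 1 K, i ^ (K.primeFactors.lcm (fun p => p - 1))) ≡
      (K + 1) ^ (K.primeFactors.lcm (fun p => p - 1)) [MOD K] := by
  set n := K.primeFactors.lcm (fun p => p - 1) with hn
  have hK1 : 1 < K := hK.1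
  have hK0 : 0 < K := lt_trans one_pos hK1
  have hsq : Squarefree K := ppn_squarefree K hK
  have hn0 : n ≠ 0 := by
    rw [hn]
    intro h
    rw [Finset.lcm_eq_zero_iff] at h
    obtain ⟨p, hp, hp0⟩ := h
    have := (Nat.prime_of_mem_primeFactors hp).two_le
    omega
  -- for each prime factor p : S ≡ 1 [MOD p]
  have hkey : ∀ p ∈ K.primeFactors,
      ((∑ i ∈ Finset.Icc 1 K, i ^ n : ℕ) : ZMod p) = 1 := by
    intro p hp
    have hpp := Nat.prime_of_mem_primeFactors hp
    haveI : Fact p.Prime := ⟨hpp⟩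
    have hpd : p ∣ K := Nat.dvd_of_mem_primeFactors hp
    have hdvd : (p - 1) ∣ n := Finset.dvd_lcm hp
    push_cast
    -- convert Icc 1 K sum to range K sum
    have h1 : ∑ i ∈ Finset.Icc 1 K, ((i : ZMod p)) ^ n
        = ∑ i ∈ Finset.range (K + 1), ((i : ZMod p)) ^ n := by
      rw [← Finset.Ico_add_one_right_eq_Icc, Finset.range_eq_Ico,
        Finset.sum_eq_sum_Ico_succ_bot (Nat.succ_pos K)]
      rw [Nat.cast_zero, zero_pow hn0, zero_add]
      rfl
    have h2 : ∑ i ∈ Finset.range (K + 1), ((i : ZMod p)) ^ n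
        = ∑ i ∈ Finset.range K, ((i : ZMod p)) ^ n := by
      rw [Finset.sum_range_succ, (ZMod.natCast_eq_zero_iff K p).mpr hpd,
        zero_pow hn0, add_zero]
    have hKm : K = (K / p) * p := (Nat.div_mul_cancel hpd).symm
    have h3 : ∑ i ∈ Finset.range K, ((i : ZMod p)) ^ n
        = ((K / p : ℕ) : ZMod p) * ∑ i ∈ Finset.range p, ((i : ZMod p)) ^ n := by
      conv_lhs => rw [hKm]
      exact sum_range_mul_pow p n (K / p)
    haveI : NeZero p := ⟨hpp.pos.ne'⟩
    rw [h1, h2, h3, sum_range_pow_zmod p n,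
      sum_pow_zmod p n hn0 hdvd, ppn_div_cast K hK p hp]
    ring
  -- combine to get S ≡ 1 [MOD K]
  have hS1 : 1 ≤ ∑ i ∈ Finset.Icc 1 K, i ^ n := by
    calc 1 = 1 ^ n := (one_pow n).symm
    _ ≤ ∑ i ∈ Finset.Icc 1 K, i ^ n :=
        Finset.single_le_sum (f := fun i => i ^ n) (fun i _ => Nat.zero_le _)
          (Finset.mem_Icc.mpr ⟨le_refl 1, hK0⟩)
  have hdvdK : K ∣ (∑ i ∈ Finset.Icc 1 K, i ^ n) - 1 := by
    have hprod : ∏ p ∈ K.primeFactors, p ∣ (∑ i ∈ Finset.Icc 1 K, i ^ n) - 1 := by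
      apply Finset.prod_primes_dvd
      · intro p hp; exact (Nat.prime_of_mem_primeFactors hp).prime
      · intro p hp
        have hk := hkey p hp
        have hmod : (∑ i ∈ Finset.Icc 1 K, i ^ n) ≡ 1 [MOD p] := by
          have : ((∑ i ∈ Finset.Icc 1 K, i ^ n : ℕ) : ZMod p) = ((1 : ℕ) : ZMod p) := by
            rw [hk]; simp
          exact (ZMod.natCast_eq_natCast_iff _ _ _).mp this
        exact (Nat.modEq_iff_dvd' hS1).mp hmod.symm
    rwa [Nat.prod_primeFactors_of_squarefree hsq] at hprod
  have hSmod : (∑ i ∈ Finset.Icc 1 K, i ^ n) ≡ 1 [MOD K] :=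
    ((Nat.modEq_iff_dvd' hS1).mpr hdvdK).symm
  have hright : (K + 1) ^ n ≡ 1 [MOD K] := by
    calc (K + 1) ^ n ≡ 1 ^ n [MOD K] := Nat.ModEq.pow n (by
          unfold Nat.ModEq; simp [Nat.add_mod_left])
    _ = 1 := one_pow n
  exact hSmod.trans hright.symm
end

section
/- For positive integers k and n, the congruence 1ⁿ + 2ⁿ + ⋯ + kⁿ ≡ (k+1)ⁿ (mod k) holds if and only if 1/k + Σ_{p prime, p ∣ k} 1/p is an integer and every prime p dividing k satisfies (p − 1) ∣ n. -/
open Finset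

lemma zmod_sum_pow (p : ℕ) [Fact p.Prime] {n : ℕ} (hn : n ≠ 0) :
    ∑ x : ZMod p, x ^ n = if (p - 1) ∣ n then (-1 : ZMod p) else 0 := by
  classical
  let φ : (ZMod p)ˣ ↪ ZMod p := ⟨fun x ↦ x, Units.val_injective⟩
  have hmap : (univ : Finset (ZMod p)ˣ).map φ = univ \ {0} := by
    ext x
    simpa only [mem_map, mem_univ, Function.Embedding.coeFn_mk, true_and, mem_sdiff,
      mem_singleton, φ] using
        (show (∃ a : (ZMod p)ˣ, (a : ZMod p) = x) ↔ ¬x = 0 from isUnit_iff_ne_zero)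
  calc ∑ x : ZMod p, x ^ n
      = ∑ x ∈ (univ : Finset (ZMod p)) \ {0}, x ^ n := by
        rw [← Finset.sum_sdiff (Finset.subset_univ ({0} : Finset (ZMod p))),
          Finset.sum_singleton, zero_pow hn, add_zero]
    _ = ∑ x : (ZMod p)ˣ, ((x : ZMod p)) ^ n := by rw [← hmap, Finset.sum_map]; rfl
    _ = if (p - 1) ∣ n then (-1 : ZMod p) else 0 := by
        have h := FiniteField.sum_pow_units (ZMod p) n
        rw [ZMod.card] at h
        rw [← h]

lemma sum_Icc_pow_zmod (p : ℕ) [Fact p.Prime] {n : ℕ} (hn : n ≠ 0) :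
    ∑ i ∈ Icc 1 p, ((i : ZMod p)) ^ n = if (p - 1) ∣ n then (-1 : ZMod p) else 0 := by
  have hp : 0 < p := (Fact.out : p.Prime).pos
  rw [← zmod_sum_pow p hn]
  have h1 : ∑ i ∈ range (p+1), ((i : ZMod p)) ^ n
      = ∑ i ∈ range p, ((i : ZMod p)) ^ n + ((p : ZMod p))^n := Finset.sum_range_succ _ _
  have h2 : ∑ i ∈ range (p+1), ((i : ZMod p)) ^ n
      = ((0:ℕ) : ZMod p)^n + ∑ i ∈ Icc 1 p, ((i : ZMod p)) ^ n := by
    rw [Finset.range_eq_Ico, Finset.sum_eq_sum_Ico_succ_bot (by omega), Finset.Ico_add_one_right_eq_Icc]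
  have h3 : ∑ i ∈ Icc 1 p, ((i : ZMod p)) ^ n = ∑ i ∈ range p, ((i : ZMod p)) ^ n := by
    have h := h1.symm.trans h2
    simp only [ZMod.natCast_self, Nat.cast_zero, zero_pow hn, add_zero, zero_add] at h
    exact h.symm
  rw [h3]
  exact Finset.sum_nbij' (fun i => ((i : ZMod p))) (fun x => x.val)
    (fun a _ => Finset.mem_univ _)
    (fun b _ => Finset.mem_range.mpr (ZMod.val_lt b))
    (fun a ha => ZMod.val_cast_of_lt (Finset.mem_range.mp ha))
    (fun b _ => ZMod.natCast_rightInverse b)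
    (fun a _ => rfl)
lemma sum_range_pow_mul (p m n : ℕ) :
    ∑ i ∈ range (p * m), (((i + 1 : ℕ)) : ZMod p) ^ n
      = (m : ZMod p) * ∑ i ∈ range p, (((i + 1 : ℕ)) : ZMod p) ^ n := by
  induction m with
  | zero => simp
  | succ m ih =>
    rw [Nat.mul_succ, Finset.sum_range_add, ih]
    have hshift : ∀ i, (((p * m + i + 1 : ℕ)) : ZMod p) ^ n = (((i + 1 : ℕ)) : ZMod p) ^ n := by
      intro i
      congr 1
      push_cast [ZMod.natCast_self]
      ring
    simp only [hshift]
    push_cast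
    ring

lemma sum_Icc_pow_of_dvd (p k n : ℕ) (hp : 0 < p) (hpk : p ∣ k) :
    ∑ i ∈ Icc 1 k, ((i : ZMod p)) ^ n
      = ((k / p : ℕ) : ZMod p) * ∑ i ∈ Icc 1 p, ((i : ZMod p)) ^ n := by
  have hIcc : ∀ j : ℕ, ∑ i ∈ Icc 1 j, ((i : ZMod p)) ^ n
      = ∑ i ∈ range j, (((i + 1 : ℕ)) : ZMod p) ^ n := by
    intro j
    rw [← Finset.Ico_add_one_right_eq_Icc, Finset.sum_Ico_eq_sum_range]
    simp [add_comm]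
  rw [hIcc, hIcc]
  obtain ⟨m, rfl⟩ := hpk
  rw [Nat.mul_div_cancel_left _ hp]
  exact sum_range_pow_mul p m n
lemma int_dvd_iff_forall_primepow (k : ℕ) (hk : k ≠ 0) (d : ℤ) :
    (k : ℤ) ∣ d ↔ ∀ p ∈ k.primeFactors, (p : ℤ) ^ (k.factorization p) ∣ d := by
  constructor
  · intro h p hp
    exact dvd_trans (by exact_mod_cast Int.natCast_dvd_natCast.mpr (Nat.ordProj_dvd k p)) h
  · intro h
    have hfac : (k : ℤ) = ∏ p ∈ k.primeFactors, (p : ℤ) ^ (k.factorization p) := by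
      conv_lhs => rw [← Nat.factorization_prod_pow_eq_self hk]
      rw [Finsupp.prod, Nat.support_factorization]
      push_cast
      rfl
    rw [hfac]
    refine Finset.prod_dvd_of_coprime ?_ h
    intro p hp q hq hpq
    have hp' := Nat.prime_of_mem_primeFactors hp
    have hq' := Nat.prime_of_mem_primeFactors hq
    apply IsCoprime.pow
    rw [Int.isCoprime_iff_gcd_eq_one]
    simpa [Int.gcd_natCast_natCast] using (Nat.coprime_primes hp' hq').mpr hpq
lemma key_prime_S (k n q : ℕ) (hk : k ≠ 0) (hn : n ≠ 0) (hq : q ∈ k.primeFactors) :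
    ((q : ℤ) ^ (k.factorization q) ∣ ((∑ i ∈ Icc 1 k, i ^ n : ℕ) : ℤ) - 1)
      ↔ (k.factorization q = 1 ∧ (q - 1) ∣ n ∧ q ∣ k / q + 1) := by
  haveI : Fact q.Prime := ⟨Nat.prime_of_mem_primeFactors hq⟩
  have hq' : q.Prime := Fact.out
  have hqk : q ∣ k := Nat.dvd_of_mem_primeFactors hq
  have he : 1 ≤ k.factorization q := hq'.factorization_pos_of_dvd hk hqk
  have hS : ((∑ i ∈ Icc 1 k, i ^ n : ℕ) : ZMod q)
      = ((k / q : ℕ) : ZMod q) * (if (q - 1) ∣ n then (-1 : ZMod q) else 0) := by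
    push_cast
    rw [sum_Icc_pow_of_dvd q k n hq'.pos hqk, sum_Icc_pow_zmod q hn]
  have hiff : ((q : ℤ) ∣ ((∑ i ∈ Icc 1 k, i ^ n : ℕ) : ℤ) - 1)
      ↔ (((∑ i ∈ Icc 1 k, i ^ n : ℕ)) : ZMod q) = 1 := by
    rw [← ZMod.intCast_zmod_eq_zero_iff_dvd]
    push_cast
    rw [sub_eq_zero]
  constructor
  · intro h
    have h1 : (((∑ i ∈ Icc 1 k, i ^ n : ℕ)) : ZMod q) = 1 :=
      hiff.mp (dvd_trans (dvd_pow_self (q : ℤ) (by omega)) h)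
    rw [hS] at h1
    by_cases hd : (q - 1) ∣ n
    · rw [if_pos hd] at h1
      have hkq : ((k / q : ℕ) : ZMod q) = -1 := by linear_combination -h1
      have he1 : k.factorization q = 1 := by
        by_contra hne
        have h2 : 2 ≤ k.factorization q := by omega
        have hdvd2 : q ∣ k / q := by
          rw [Nat.dvd_div_iff_mul_dvd hqk]
          calc q * q = q ^ 2 := by ring
            _ ∣ q ^ (k.factorization q) := pow_dvd_pow q h2
            _ ∣ k := Nat.ordProj_dvd k q
        have h0 : ((k / q : ℕ) : ZMod q) = 0 :=
          (ZMod.natCast_eq_zero_iff _ _).mpr hdvd2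
        rw [h0] at hkq
        exact one_ne_zero (by linear_combination hkq : (1 : ZMod q) = 0)
      refine ⟨he1, hd, (ZMod.natCast_eq_zero_iff _ _).mp ?_⟩
      push_cast
      rw [hkq]
      ring
    · rw [if_neg hd, mul_zero] at h1
      exact absurd h1.symm one_ne_zero
  · rintro ⟨he1, hd, hdq⟩
    rw [he1, pow_one]
    apply hiff.mpr
    rw [hS, if_pos hd]
    have h0 : ((k / q + 1 : ℕ) : ZMod q) = 0 :=
      (ZMod.natCast_eq_zero_iff _ _).mpr hdq
    push_cast at h0
    linear_combination -h0
lemma key_prime_N (k q : ℕ) (hk : k ≠ 0) (hq : q ∈ k.primeFactors) :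
    ((q : ℤ) ^ (k.factorization q) ∣ ((1 + ∑ p ∈ k.primeFactors, k / p : ℕ) : ℤ))
      ↔ (k.factorization q = 1 ∧ q ∣ k / q + 1) := by
  haveI : Fact q.Prime := ⟨Nat.prime_of_mem_primeFactors hq⟩
  have hq' : q.Prime := Fact.out
  have hqk : q ∣ k := Nat.dvd_of_mem_primeFactors hq
  have he : 1 ≤ k.factorization q := hq'.factorization_pos_of_dvd hk hqk
  have hsum : (∑ p ∈ k.primeFactors, ((k / p : ℕ) : ZMod q)) = ((k / q : ℕ) : ZMod q) := by
    refine Finset.sum_eq_single_of_mem q hq ?_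
    intro p hp hpq
    have hp' := Nat.prime_of_mem_primeFactors hp
    have hpk := Nat.dvd_of_mem_primeFactors hp
    have hqdvd : q ∣ k / p := by
      have h1 : q ∣ (k / p) * p := by rw [Nat.div_mul_cancel hpk]; exact hqk
      exact (Nat.Coprime.dvd_of_dvd_mul_right
        ((Nat.coprime_primes hq' hp').mpr (Ne.symm hpq)) h1)
    exact (ZMod.natCast_eq_zero_iff _ _).mpr hqdvd
  have hN : ((1 + ∑ p ∈ k.primeFactors, k / p : ℕ) : ZMod q)
      = 1 + ((k / q : ℕ) : ZMod q) := by
    push_cast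
    rw [hsum]
  constructor
  · intro h
    have h1 : q ∣ (1 + ∑ p ∈ k.primeFactors, k / p : ℕ) := by
      have := dvd_trans (dvd_pow_self (q : ℤ) (by omega : k.factorization q ≠ 0)) h
      exact_mod_cast this
    have h2 : ((1 + ∑ p ∈ k.primeFactors, k / p : ℕ) : ZMod q) = 0 :=
      (ZMod.natCast_eq_zero_iff _ _).mpr h1
    rw [hN] at h2
    have he1 : k.factorization q = 1 := by
      by_contra hne
      have hdvd2 : q ∣ k / q := by
        rw [Nat.dvd_div_iff_mul_dvd hqk]
        calc q * q = q ^ 2 := by ring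
          _ ∣ q ^ (k.factorization q) := pow_dvd_pow q (by omega)
          _ ∣ k := Nat.ordProj_dvd k q
      rw [(ZMod.natCast_eq_zero_iff _ _).mpr hdvd2] at h2
      exact one_ne_zero (by linear_combination h2 : (1 : ZMod q) = 0)
    refine ⟨he1, (ZMod.natCast_eq_zero_iff _ _).mp ?_⟩
    push_cast
    linear_combination h2
  · rintro ⟨he1, hdq⟩
    rw [he1, pow_one]
    have h0 : ((k / q + 1 : ℕ) : ZMod q) = 0 :=
      (ZMod.natCast_eq_zero_iff _ _).mpr hdq
    push_cast at h0
    have : ((1 + ∑ p ∈ k.primeFactors, k / p : ℕ) : ZMod q) = 0 := by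
      rw [hN]; linear_combination h0
    exact_mod_cast (ZMod.natCast_eq_zero_iff _ _).mp this

lemma rat_int_iff (k : ℕ) (hk : k ≠ 0) :
    (∃ z : ℤ, (1 : ℚ) / k + ∑ p ∈ k.primeFactors, (1 : ℚ) / p = z)
      ↔ k ∣ 1 + ∑ p ∈ k.primeFactors, k / p := by
  have hk0 : (k : ℚ) ≠ 0 := Nat.cast_ne_zero.mpr hk
  have hval : (1 : ℚ) / k + ∑ p ∈ k.primeFactors, (1 : ℚ) / p
      = ((1 + ∑ p ∈ k.primeFactors, k / p : ℕ) : ℚ) / k := by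
    push_cast
    rw [add_div, Finset.sum_div]
    congr 1
    refine Finset.sum_congr rfl ?_
    intro p hp
    have hpk := Nat.dvd_of_mem_primeFactors hp
    have hp0 : (p : ℚ) ≠ 0 :=
      Nat.cast_ne_zero.mpr (Nat.pos_of_mem_primeFactors hp).ne'
    rw [Nat.cast_div hpk hp0]
    field_simp
  rw [hval]
  constructor
  · rintro ⟨z, hz⟩
    rw [div_eq_iff hk0] at hz
    have hz' : ((1 + ∑ p ∈ k.primeFactors, k / p : ℕ) : ℤ) = z * k := by
      apply Int.cast_injective (α := ℚ)
      push_cast at hz ⊢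
      exact hz
    exact Int.natCast_dvd_natCast.mp ⟨z, hz'.trans (mul_comm z k)⟩
  · rintro ⟨m, hm⟩
    refine ⟨m, ?_⟩
    rw [hm]
    push_cast
    field_simp

theorem erdos_moser_congruence_iff (k n : ℕ) (hk : 0 < k) (hn : 0 < n) :
    (∑ i ∈ Finset.Icc 1 k, i ^ n) ≡ (k + 1) ^ n [MOD k] ↔
    ((∃ z : ℤ, (1 : ℚ) / k + ∑ p ∈ k.primeFactors, (1 : ℚ) / p = z) ∧
      ∀ p ∈ k.primeFactors, (p - 1) ∣ n) := by
  have hk' : k ≠ 0 := hk.ne'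
  have hn' : n ≠ 0 := hn.ne'
  have h1 : (k + 1) ^ n ≡ 1 [MOD k] := by
    have hb : (k + 1) ≡ 1 [MOD k] := Nat.add_mod_left k 1
    simpa using hb.pow n
  have hmain : (∑ i ∈ Icc 1 k, i ^ n) ≡ (k + 1) ^ n [MOD k]
      ↔ (∑ i ∈ Icc 1 k, i ^ n) ≡ 1 [MOD k] :=
    ⟨fun h => h.trans h1, fun h => h.trans h1.symm⟩
  rw [hmain, Nat.modEq_iff_dvd]
  rw [show ((1 : ℕ) : ℤ) - ((∑ i ∈ Icc 1 k, i ^ n : ℕ) : ℤ)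
      = -(((∑ i ∈ Icc 1 k, i ^ n : ℕ) : ℤ) - 1) by push_cast; ring, dvd_neg,
    int_dvd_iff_forall_primepow k hk']
  rw [rat_int_iff k hk']
  constructor
  · intro h
    have h' := fun q hq => (key_prime_S k n q hk' hn' hq).mp (h q hq)
    refine ⟨?_, fun q hq => (h' q hq).2.1⟩
    have hdN : (k : ℤ) ∣ ((1 + ∑ p ∈ k.primeFactors, k / p : ℕ) : ℤ) := by
      rw [int_dvd_iff_forall_primepow k hk']
      intro q hq
      exact (key_prime_N k q hk' hq).mpr ⟨(h' q hq).1, (h' q hq).2.2⟩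
    exact_mod_cast hdN
  · rintro ⟨hN, hdvd⟩
    intro q hq
    have hNi : (k : ℤ) ∣ ((1 + ∑ p ∈ k.primeFactors, k / p : ℕ) : ℤ) :=
      Int.natCast_dvd_natCast.mpr hN
    obtain ⟨he1, hq1⟩ := (key_prime_N k q hk' hq).mp
      ((int_dvd_iff_forall_primepow k hk' _).mp hNi q hq)
    exact (key_prime_S k n q hk' hn' hq).mpr ⟨he1, hdvd q hq, hq1⟩
end

section
/- If K is a primary pseudoperfect number with exactly 2 distinct prime factors, then K = 6. -/
theorem ppn_two_prime_factors (K : ℕ) (hK : IsPPN K)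
    (h2 : K.primeFactors.card = 2) : K = 6 := by
  obtain ⟨hK1, heq⟩ := hK
  obtain ⟨p, q, hpq, hset⟩ := Finset.card_eq_two.mp h2
  have hpmem : p ∈ K.primeFactors := by rw [hset]; simp
  have hqmem : q ∈ K.primeFactors := by rw [hset]; simp
  have hp := Nat.prime_of_mem_primeFactors hpmem
  have hq := Nat.prime_of_mem_primeFactors hqmem
  have hpd := Nat.dvd_of_mem_primeFactors hpmem
  have hqd := Nat.dvd_of_mem_primeFactors hqmem
  have hKpos : 0 < K := by omega
  have hK0 : (K : ℚ) ≠ 0 := by exact_mod_cast hKpos.ne'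
  have hp0 : (p : ℚ) ≠ 0 := by exact_mod_cast hp.pos.ne'
  have hq0 : (q : ℚ) ≠ 0 := by exact_mod_cast hq.pos.ne'
  rw [hset, Finset.sum_pair hpq] at heq
  have hnat : p * q + K * q + K * p = K * (p * q) := by
    have : (p : ℚ) * q + K * q + K * p = K * (p * q) := by
      field_simp at heq
      linarith [heq]
    exact_mod_cast this
  -- p*q ∣ K
  obtain ⟨m, hm⟩ : p * q ∣ K :=
    (Nat.Coprime.mul_dvd_of_dvd_of_dvd ((Nat.coprime_primes hp hq).mpr hpq) hpd hqd)
  have hpq0 : 0 < p * q := Nat.mul_pos hp.pos hq.pos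
  have hm0 : 0 < m := by
    rcases Nat.eq_zero_or_pos m with h | h
    · simp [h] at hm; omega
    · exact h
  subst hm
  have key : 1 + m * q + m * p = m * (p * q) := by
    have h' : (p * q) * (1 + m * q + m * p) = (p * q) * (m * (p * q)) := by ring_nf; ring_nf at hnat; linarith
    exact Nat.eq_of_mul_eq_mul_left hpq0 h'
  have hmz : (m : ℤ) * ((p : ℤ) * q - q - p) = 1 := by
    have : (1 : ℤ) + m * q + m * p = m * (p * q) := by exact_mod_cast key
    ring_nf; ring_nf at this; linarith
  have hm1 : m = 1 := by
    have h1 : (m : ℤ) ∣ 1 := ⟨_, hmz.symm⟩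
    have := Int.le_of_dvd one_pos h1
    omega
  subst hm1
  have hkey : p * q = p + q + 1 := by omega
  have hd : ((p : ℤ) - 1) * ((q : ℤ) - 1) = 2 := by
    have : (p : ℤ) * q = p + q + 1 := by exact_mod_cast hkey
    ring_nf; ring_nf at this; linarith
  have hp2 := hp.two_le
  have hq2 := hq.two_le
  have hple : (p : ℤ) - 1 ≤ 2 := Int.le_of_dvd two_pos ⟨_, hd.symm⟩
  have hqle : (q : ℤ) - 1 ≤ 2 := Int.le_of_dvd two_pos ⟨_, by rw [mul_comm] at hd; exact hd.symm⟩
  have hp3 : p ≤ 3 := by omega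
  have hq3 : q ≤ 3 := by omega
  interval_cases p <;> interval_cases q <;> omega
end
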